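/- Let G be a finite group whose Sylow p-subgroup P is abelian, and let H be a normal p-subgroup of G. Let g ∈ P with g ∉ H, and let T ≤ G be the subgroup containing H with T/H = C_{G/H}(gH). If C_G(g) is a proper subgroup of T, then g = xy where x ∈ C_G(T) with x ≠ 1 and y ∈ H with y ≠ 1; moreover C_G(x) = T, the image of C_G(x) in G/H equals C_{G/H}(xH), and C_G(y) ∩ T = C_G(g). -/

import Mathlib

/-!
Common definitions: the set `N(G)` of conjugacy class sizes, `A`-groups,
the largest `p`-power `|G||_p` dividing an element of `N(G)`, the Fitting subgroup,
and the natural conjugation action of `G ⧸ H` on an abelian normal subgroup `H`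
(used to form the semidirect product `H ⋊ G/H`).
-/

/-- `N(G)`: the set of conjugacy class sizes (indices of centralizers) of `G`. -/
def indexSet (G : Type*) [Group G] : Set ℕ :=
  {n | ∃ x : G, n = (Subgroup.centralizer {x}).index}

/-- A finite group is an `A`-group if all its Sylow subgroups are abelian. -/
def IsAGroup (G : Type*) [Group G] : Prop :=
  ∀ (p : ℕ), p.Prime → ∀ P : Sylow p G, ∀ a b : (P : Subgroup G), a * b = b * a

/-- `|G||_p`: the highest power of `p` dividing some element of `N(G)`. -/
noncomputable def maxPPart (G : Type*) [Group G] (p : ℕ) : ℕ :=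
  sSup {m | (∃ k : ℕ, m = p ^ k) ∧ ∃ n ∈ indexSet G, m ∣ n}

open scoped Classical in
/-- The natural action of `G ⧸ H` on an abelian normal subgroup `H`, induced by
conjugation (`h ↦ g * h * g⁻¹`); it is used to form the semidirect product `H ⋊ G/H`.
(Junk value — the trivial action — if `H` is not abelian; see `quotConj_eq` below.) -/
noncomputable def quotConj (G : Type*) [Group G] (H : Subgroup G) [H.Normal] :
    G ⧸ H →* MulAut ↥H :=
  if h : H ≤ (MulAut.conjNormal (H := H)).ker then
    QuotientGroup.lift H MulAut.conjNormal h
  else 1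

/-- When `H` is abelian, `quotConj` is indeed the conjugation action `h ↦ g * h * g⁻¹`. -/
theorem quotConj_eq (G : Type*) [Group G] (H : Subgroup G) [H.Normal]
    (hab : ∀ a b : ↥H, a * b = b * a) (g : G) :
    quotConj G H (g : G ⧸ H) = MulAut.conjNormal g := by
  have hker : H ≤ (MulAut.conjNormal (H := H)).ker := by
    intro x hx
    rw [MonoidHom.mem_ker]
    ext y
    have h2 : x * (y : G) = (y : G) * x := congrArg Subtype.val (hab ⟨x, hx⟩ y)
    simp only [MulAut.conjNormal_apply, MulAut.one_apply]
    rw [mul_inv_eq_iff_eq_mul]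
    exact h2
  rw [quotConj, dif_pos hker]
  rfl

/-- The Fitting subgroup: the join of all normal nilpotent subgroups. -/
def fitting (G : Type*) [Group G] : Subgroup G :=
  ⨆ H ∈ {H : Subgroup G | H.Normal ∧ Group.IsNilpotent ↥H}, H

instance fitting_normal (G : Type*) [Group G] : (fitting G).Normal := by
  constructor
  intro n hn g
  rw [fitting, iSup_subtype'] at hn ⊢
  refine Subgroup.iSup_induction _
    (C := fun x => g * x * g⁻¹ ∈
      ⨆ H : {H : Subgroup G | H.Normal ∧ Group.IsNilpotent ↥H}, (H : Subgroup G))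
    hn (fun H x hx => ?_) ?_ (fun x y hx hy => ?_)
  · exact Subgroup.mem_iSup_of_mem H (H.2.1.conj_mem x hx g)
  · simpa using Subgroup.one_mem _
  · have h2 := Subgroup.mul_mem _ hx hy
    have h3 : g * (x * y) * g⁻¹ = (g * x * g⁻¹) * (g * y * g⁻¹) := by group
    show g * (x * y) * g⁻¹ ∈ _
    rwa [h3]

/-- Let `P` be an abelian Sylow `p`-subgroup of a finite group `G` and `H` a
normal `p`-subgroup of `G`. Let `g ∈ P` with `g ∉ H`, and let `T` be the subgroup of `G`
containing `H` with `T/H = C_{G/H}(gH)`. If `C_G(g) < T`, then `g = xy` with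
`1 ≠ x ∈ C_G(T)` and `1 ≠ y ∈ H`; moreover `C_G(x) = T`, the image of `C_G(x)` in `G/H`
equals `C_{G/H}(xH)`, and `C_G(y) ∩ T = C_G(g)`. -/
theorem stmt_5 (p : ℕ) (hp : p.Prime) (G : Type*) [Group G] [Finite G]
    (P : Sylow p G) (hPab : ∀ a b : ↥(P : Subgroup G), a * b = b * a)
    (H : Subgroup G) [H.Normal] (hHp : IsPGroup p ↥H)
    (g : G) (hgP : g ∈ (P : Subgroup G)) (hgH : g ∉ H)
    (T : Subgroup G) (hHT : H ≤ T)
    (hT : T.map (QuotientGroup.mk' H) = Subgroup.centralizer {(g : G ⧸ H)})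
    (hlt : Subgroup.centralizer {g} < T) :
    ∃ x y : G, x ∈ Subgroup.centralizer (T : Set G) ∧ x ≠ 1 ∧ y ∈ H ∧ y ≠ 1 ∧
      g = x * y ∧
      Subgroup.centralizer {x} = T ∧
      (Subgroup.centralizer {x}).map (QuotientGroup.mk' H)
        = Subgroup.centralizer {(x : G ⧸ H)} ∧
      Subgroup.centralizer {y} ⊓ T = Subgroup.centralizer {g} := by
  classical
  haveI hp' : Fact p.Prime := ⟨hp⟩
  have hPcomm : ∀ a b : G, a ∈ (P : Subgroup G) → b ∈ (P : Subgroup G) → a * b = b * a := by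
    intro a b ha hb
    exact congrArg Subtype.val (hPab ⟨a, ha⟩ ⟨b, hb⟩)
  have hHP : H ≤ (P : Subgroup G) := by
    have h1 : IsPGroup p ↥(H ⊔ (P : Subgroup G)) :=
      IsPGroup.to_sup_of_normal_left hHp P.isPGroup'
    have h2 := P.3 h1 le_sup_right
    exact h2 ▸ le_sup_left
  have hcomap : Subgroup.comap (QuotientGroup.mk' H)
      (Subgroup.centralizer {(g : G ⧸ H)}) = T := by
    rw [← hT]
    exact Subgroup.comap_map_eq_self (by rw [QuotientGroup.ker_mk']; exact hHT)
  have hmemT : ∀ c : G, c ∈ T ↔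
      ((c : G ⧸ H) * (g : G ⧸ H) = (g : G ⧸ H) * (c : G ⧸ H)) := by
    intro c
    rw [← hcomap, Subgroup.mem_comap, Subgroup.mem_centralizer_singleton_iff]
    rfl
  have hconjH : ∀ t : G, t ∈ T → g⁻¹ * (t * g * t⁻¹) ∈ H := by
    intro t ht
    have h1 := (hmemT t⁻¹).mp (inv_mem ht)
    have h2 : ((t⁻¹ * g : G) : G ⧸ H) = ((g * t⁻¹ : G) : G ⧸ H) := by
      simpa using h1
    have h3 := (QuotientGroup.eq).mp h2
    simpa [mul_assoc, mul_inv_rev] using h3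
  have hPT : (P : Subgroup G) ≤ T := by
    intro c hc
    rw [hmemT]
    rw [show ((c : G ⧸ H) * (g : G ⧸ H) : G ⧸ H) = ((c * g : G) : G ⧸ H) from rfl,
      show ((g : G ⧸ H) * (c : G ⧸ H) : G ⧸ H) = ((g * c : G) : G ⧸ H) from rfl,
      hPcomm c g hc hgP]
  -- the abelian T-invariant subgroup M
  set M : Subgroup G := Subgroup.comap (QuotientGroup.mk' H)
      (Subgroup.zpowers ((g : G ⧸ H))) with hM
  have hHM : H ≤ M := by
    intro a ha
    simp only [hM, Subgroup.mem_comap]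
    have : (QuotientGroup.mk' H) a = 1 := (QuotientGroup.eq_one_iff a).mpr ha
    rw [this]
    exact Subgroup.one_mem _
  have hMrep : ∀ a ∈ M, ∃ z : ℤ, (g ^ z)⁻¹ * a ∈ H := by
    intro a ha
    obtain ⟨z, hz⟩ := ha
    simp only [QuotientGroup.mk'_apply] at hz
    refine ⟨z, ?_⟩
    have h2 : ((g ^ z : G) : G ⧸ H) = ((a : G) : G ⧸ H) := by
      rw [QuotientGroup.mk_zpow]; exact hz
    exact (QuotientGroup.eq).mp h2
  have hMP : M ≤ (P : Subgroup G) := by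
    intro a ha
    obtain ⟨z, hz⟩ := hMrep a ha
    have : a = g ^ z * ((g ^ z)⁻¹ * a) := by group
    rw [this]
    exact Subgroup.mul_mem _ (Subgroup.zpow_mem _ hgP z) (hHP hz)
  have hgM : g ∈ M := by
    simp only [hM, Subgroup.mem_comap]
    exact Subgroup.mem_zpowers _
  have hMinv : ∀ t : G, t ∈ T → ∀ a ∈ M, t * a * t⁻¹ ∈ M := by
    intro t ht a ha
    obtain ⟨z, hz⟩ := ha
    simp only [QuotientGroup.mk'_apply] at hz
    simp only [hM, Subgroup.mem_comap]
    refine ⟨z, ?_⟩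
    have hcomm : ((g : G ⧸ H)) ^ z * (t : G ⧸ H) = (t : G ⧸ H) * ((g : G ⧸ H)) ^ z := by
      have h1 : Commute ((g : G ⧸ H)) ((t : G ⧸ H)) := ((hmemT t).mp ht).symm
      exact (h1.zpow_left z).eq
    show ((g : G ⧸ H)) ^ z = ((t * a * t⁻¹ : G) : G ⧸ H)
    have hz' : ((g : G ⧸ H)) ^ z = ((a : G) : G ⧸ H) := hz
    have h2 : ((t * a * t⁻¹ : G) : G ⧸ H)
        = (t : G ⧸ H) * ((a : G) : G ⧸ H) * ((t : G ⧸ H))⁻¹ := by rfl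
    rw [h2, ← hz', ← hcomm]
    group
  letI : CommGroup ↥M :=
    { (inferInstance : Group ↥M) with
      mul_comm := fun a b => Subtype.ext (hPcomm a b (hMP a.2) (hMP b.2)) }
  set K : Subgroup T := (P : Subgroup G).subgroupOf T with hK
  set S := T ⧸ K with hS
  letI : Fintype S := Fintype.ofFinite _
  have Fwd : ∀ a b : ↥T, @Setoid.r _ (QuotientGroup.leftRel K) a b →
      ((a : G) * g * (a : G)⁻¹ = (b : G) * g * (b : G)⁻¹) := by
    intro a b hab
    rw [QuotientGroup.leftRel_apply] at hab
    have hq : ((a⁻¹ * b : T) : G) ∈ (P : Subgroup G) := hab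
    have hb : (b : G) = (a : G) * ((a⁻¹ * b : T) : G) := by
      push_cast
      group
    rw [hb]
    have hcomm := hPcomm _ g hq hgP
    rw [mul_inv_rev]
    symm
    calc (a:G) * ((a⁻¹*b : T):G) * g * (((a⁻¹*b : T):G)⁻¹ * (a:G)⁻¹)
        = (a:G) * (((a⁻¹*b : T):G) * g * ((a⁻¹*b : T):G)⁻¹) * (a:G)⁻¹ := by group
      _ = (a:G) * g * (a:G)⁻¹ := by rw [hcomm]; group
  set F : S → G := fun s => Quotient.liftOn' s (fun t : T => (t : G) * g * (t : G)⁻¹) Fwd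
    with hF
  have hFmk : ∀ t : T, F (QuotientGroup.mk t) = (t : G) * g * (t : G)⁻¹ := by
    intro t
    simp only [hF]
    rfl
  have hFg : ∀ s : S, g⁻¹ * F s ∈ H := by
    intro s
    induction s using Quotient.inductionOn' with
    | h t => exact hFmk t ▸ hconjH t t.2
  have hFM : ∀ s : S, F s ∈ M := by
    intro s
    have h1 : F s = g * (g⁻¹ * F s) := by group
    rw [h1]
    exact Subgroup.mul_mem _ hgM (hHM (hFg s))
  set F' : S → ↥M := fun s => ⟨F s, hFM s⟩ with hF'
  set n := Fintype.card S with hn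
  set x₀' : ↥M := ∏ s : S, F' s with hx₀'
  set x₀ : G := (x₀' : G) with hx₀
  have hx₀M : x₀ ∈ M := x₀'.2
  have hx₀P : x₀ ∈ (P : Subgroup G) := hMP hx₀M
  -- invariance of x₀ under T-conjugation
  have hconjx₀ : ∀ t : G, t ∈ T → t * x₀ * t⁻¹ = x₀ := by
    intro t ht
    set tt : T := ⟨t, ht⟩ with htt
    set ψ : ↥M →* ↥M :=
      { toFun := fun a => ⟨t * (a : G) * t⁻¹, hMinv t ht a a.2⟩
        map_one' := by
          ext
          simp
        map_mul' := by
          intro a b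
          ext
          push_cast
          group } with hψ
    have h0 : t * x₀ * t⁻¹ = ((ψ x₀' : ↥M) : G) := by rw [hψ, hx₀]; rfl
    rw [h0, hx₀', map_prod]
    have h2 : ∀ s : S, ψ (F' s) = F' (tt • s) := by
      intro s
      induction s using Quotient.inductionOn' with
      | h u =>
        have hsm : tt • (QuotientGroup.mk u : S) = QuotientGroup.mk (tt * u) :=
          MulAction.Quotient.smul_mk K tt u
        ext
        rw [hsm]
        show t * F (QuotientGroup.mk u) * t⁻¹ = F (QuotientGroup.mk (tt * u))
        rw [hFmk, hFmk]
        push_cast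
        group
        rfl
    rw [Finset.prod_congr rfl fun s _ => h2 s]
    have h3 : ∀ s : S, F' (tt • s) = F' ((MulAction.toPerm tt) s) := fun s => rfl
    rw [Finset.prod_congr rfl fun s _ => h3 s]
    rw [Equiv.prod_comp (MulAction.toPerm tt) F']
  -- image of x₀ in the quotient
  set Z : Subgroup (G ⧸ H) := Subgroup.zpowers ((g : G ⧸ H)) with hZ
  set φ : ↥M →* ↥Z :=
    { toFun := fun a => ⟨((a : G) : G ⧸ H), a.2⟩
      map_one' := rfl
      map_mul' := fun a b => rfl } with hφ
  letI : CommGroup ↥Z := by open scoped IsMulCommutative in infer_instance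
  have hmkx₀ : ((x₀ : G) : G ⧸ H) = ((g ^ n : G) : G ⧸ H) := by
    have h1 : φ x₀' = (⟨(g : G ⧸ H), Subgroup.mem_zpowers _⟩ : ↥Z) ^ n := by
      rw [hx₀', map_prod]
      have h2 : ∀ s : S, φ (F' s) = (⟨(g : G ⧸ H), Subgroup.mem_zpowers _⟩ : ↥Z) := by
        intro s
        ext
        exact ((QuotientGroup.eq).mpr (hFg s)).symm
      rw [Finset.prod_congr rfl fun s _ => h2 s, Finset.prod_const]
      simp [hn]
    have h3 := congrArg (Subtype.val) h1
    push_cast at h3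
    rw [show ((x₀ : G) : G ⧸ H) = ((φ x₀' : ↥Z) : G ⧸ H) from rfl]
    rw [h3]
    push_cast
    rfl
  set h : G := (g ^ n)⁻¹ * x₀ with hh
  have hhH : h ∈ H := by
    have := (QuotientGroup.eq).mp hmkx₀.symm
    simpa [hh] using this
  have hx₀eq : x₀ = g ^ n * h := by rw [hh]; group
  have hhP : h ∈ (P : Subgroup G) :=
    Subgroup.mul_mem _ (Subgroup.inv_mem _ (Subgroup.pow_mem _ hgP n)) hx₀P
  -- order considerations
  set m := Nat.card ↥(P : Subgroup G) with hm
  have hgm : g ^ m = 1 := by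
    have h1 : (⟨g, hgP⟩ : ↥(P : Subgroup G)) ^ m = 1 := pow_card_eq_one'
    have h2 := congrArg (Subtype.val) h1
    simpa using h2
  have hm1 : 1 < m := by
    rcases Nat.lt_or_ge 1 m with hlt1 | hle1
    · exact hlt1
    · exfalso
      have hmpos : 0 < m := Nat.card_pos
      have hmeq : m = 1 := le_antisymm hle1 hmpos
      apply hgH
      have : g = 1 := by rw [← pow_one g, ← hmeq, hgm]
      rw [this]
      exact H.one_mem
  have hndvd : ¬ p ∣ n := by
    intro hdvd
    have h1 : n = (P : Subgroup G).relIndex T := by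
      rw [hn, Subgroup.relIndex, Subgroup.index, Nat.card_eq_fintype_card]
    have h2 : (P : Subgroup G).relIndex T ∣ (P : Subgroup G).index :=
      ⟨T.index, (Subgroup.relIndex_mul_index hPT).symm⟩
    exact P.not_dvd_index (dvd_trans (h1 ▸ hdvd) h2)
  have hcop : Nat.Coprime n m := by
    obtain ⟨e, he⟩ := IsPGroup.iff_card.mp P.isPGroup'
    rw [hm, he]
    exact Nat.Coprime.pow_right e ((hp.coprime_iff_not_dvd.mpr hndvd).symm)
  obtain ⟨k, -, hk⟩ := Nat.exists_mul_mod_eq_one_of_coprime hcop hm1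
  have hgnk : g ^ (n * k) = g := by
    conv_lhs => rw [← Nat.div_add_mod (n * k) m, hk]
    rw [pow_add, pow_mul, hgm, one_pow, one_mul, pow_one]
  set x := x₀ ^ k with hx
  have hcommgh : Commute (g ^ n) h := hPcomm _ _ (Subgroup.pow_mem _ hgP n) hhP
  have hxval : x = g * h ^ k := by
    rw [hx, hx₀eq, hcommgh.mul_pow, ← pow_mul, hgnk]
  have hxC : x ∈ Subgroup.centralizer (T : Set G) := by
    rw [Subgroup.mem_centralizer_iff]
    intro t ht
    have h1 : t * x₀ = x₀ * t := by
      have h2 := hconjx₀ t ht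
      rw [mul_inv_eq_iff_eq_mul] at h2
      exact h2
    exact ((Commute.pow_right h1 k) : t * x = x * t)
  set y : G := (h ^ k)⁻¹ with hy
  have hyH : y ∈ H := Subgroup.inv_mem _ (Subgroup.pow_mem _ hhH k)
  have hgxy : g = x * y := by rw [hxval, hy]; group
  have hmkx : ((x : G) : G ⧸ H) = ((g : G) : G ⧸ H) := by
    rw [hxval]
    exact QuotientGroup.mk_mul_of_mem g (Subgroup.pow_mem _ hhH k)
  have hxne : x ≠ 1 := by
    intro hx1
    apply hgH
    rw [hgxy, hx1, one_mul]
    exact hyH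
  have hyne : y ≠ 1 := by
    intro hy1
    have hgx : g = x := by rw [hgxy, hy1, mul_one]
    have hle : T ≤ Subgroup.centralizer {g} := by
      intro t ht
      rw [Subgroup.mem_centralizer_singleton_iff]
      exact hgx ▸ (Subgroup.mem_centralizer_iff.mp hxC t ht)
    exact absurd hle hlt.not_ge
  have hCx : Subgroup.centralizer {x} = T := by
    apply le_antisymm
    · intro c hc
      rw [Subgroup.mem_centralizer_singleton_iff] at hc
      rw [hmemT]
      have h1 : ((c * x : G) : G ⧸ H) = ((x * c : G) : G ⧸ H) := by rw [hc]
      calc (c : G ⧸ H) * (g : G ⧸ H) = (c : G ⧸ H) * (x : G ⧸ H) := by rw [hmkx]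
        _ = ((c * x : G) : G ⧸ H) := rfl
        _ = ((x * c : G) : G ⧸ H) := h1
        _ = (x : G ⧸ H) * (c : G ⧸ H) := rfl
        _ = (g : G ⧸ H) * (c : G ⧸ H) := by rw [hmkx]
    · intro t ht
      rw [Subgroup.mem_centralizer_singleton_iff]
      exact Subgroup.mem_centralizer_iff.mp hxC t ht
  refine ⟨x, y, hxC, hxne, hyH, hyne, hgxy, hCx, ?_, ?_⟩
  · rw [hCx, hT, hmkx]
  · ext c
    simp only [Subgroup.mem_inf, Subgroup.mem_centralizer_singleton_iff]
    constructor
    · rintro ⟨hcy, hcT⟩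
      have hcx : c * x = x * c := Subgroup.mem_centralizer_iff.mp hxC c hcT
      rw [hgxy]
      calc c * (x * y) = (c * x) * y := by rw [mul_assoc]
        _ = x * (c * y) := by rw [hcx, mul_assoc]
        _ = x * (y * c) := by rw [hcy]
        _ = (x * y) * c := by rw [mul_assoc]
    · intro hcg
      have hcT : c ∈ T := by
        rw [hmemT]
        calc (c : G ⧸ H) * (g : G ⧸ H) = ((c * g : G) : G ⧸ H) := rfl
          _ = ((g * c : G) : G ⧸ H) := by rw [hcg]
          _ = (g : G ⧸ H) * (c : G ⧸ H) := rfl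
      have hcx : Commute c x := Subgroup.mem_centralizer_iff.mp hxC c hcT
      have hcy : Commute c y := by
        have hy2 : y = x⁻¹ * g := by rw [hgxy]; group
        rw [hy2]
        exact (hcx.inv_right).mul_right hcg
      exact ⟨hcy, hcT⟩
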